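/- Let A be a semilocal associative unital ring (A/Jac(A) is semisimple), write Ā = A/Jac(A), and let η ∈ Ā be an idempotent. Then there exists an idempotent e ∈ A with image η in Ā if and only if there exists a finitely generated projective right A-module P with P/(P·Jac(A)) isomorphic to ηĀ as right A-modules. -/

import Mathlib

open MulOpposite

universe u

section StmtSevenAux

variable {A B : Type u} [Ring A] [Ring B]

lemma jac_mul_right {j : A} (hj : j ∈ Ideal.jacobson (⊥ : Ideal A)) (a : A) :
    j * a ∈ Ideal.jacobson (⊥ : Ideal A) :=
  Ideal.mul_mem_right a _ hj

lemma jac_left_inv {j : A} (hj : j ∈ Ideal.jacobson (⊥ : Ideal A)) :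
    ∃ z : A, z * (1 + j) = 1 ∧ z - 1 ∈ Ideal.jacobson (⊥ : Ideal A) := by
  obtain ⟨z, hz⟩ := Ideal.mem_jacobson_iff.1 hj 1
  rw [Ideal.mem_bot, mul_one] at hz
  have h1 : z * (1 + j) = 1 := by
    rw [mul_add, mul_one]
    rw [sub_eq_zero] at hz
    rw [add_comm, hz]
  refine ⟨z, h1, ?_⟩
  have : z - 1 = -(z * j) := by
    rw [sub_eq_zero] at hz
    rw [← hz]; abel
  rw [this]
  exact neg_mem (Ideal.mul_mem_left _ z hj)

lemma jac_one_add_isUnit {j : A} (hj : j ∈ Ideal.jacobson (⊥ : Ideal A)) :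
    IsUnit (1 + j) := by
  obtain ⟨z, hz1, hz2⟩ := jac_left_inv hj
  obtain ⟨w, hw1, -⟩ := jac_left_inv hz2
  rw [add_sub_cancel] at hw1
  have hzu : (1 + j) * z = 1 := by
    have : w = 1 + j := by
      calc w = w * 1 := (mul_one w).symm
        _ = w * (z * (1 + j)) := by rw [hz1]
        _ = (w * z) * (1 + j) := (mul_assoc _ _ _).symm
        _ = 1 + j := by rw [hw1, one_mul]
    rw [← this, hw1]
  exact ⟨⟨1 + j, z, hzu, hz1⟩, rfl⟩

lemma jac_one_sub_isUnit {j : A} (hj : j ∈ Ideal.jacobson (⊥ : Ideal A)) :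
    IsUnit (1 - j) := by
  rw [sub_eq_add_neg]
  exact jac_one_add_isUnit (neg_mem hj)

/-- Nakayama-type lemma. -/
lemma nakayama {P : Type u} [AddCommGroup P] [Module Aᵐᵒᵖ P] [hfin : Module.Finite Aᵐᵒᵖ P]
    (N : Submodule Aᵐᵒᵖ P)
    (h : N ⊔ Submodule.span Aᵐᵒᵖ
        {z : P | ∃ (p : P) (j : A), j ∈ Ideal.jacobson (⊥ : Ideal A) ∧ z = op j • p} = ⊤) :
    N = ⊤ := by
  have hco : IsCoatomic (Submodule Aᵐᵒᵖ P) :=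
    CompleteLattice.coatomic_of_top_compact
      ((Submodule.fg_iff_compact _).1 hfin.fg_top)
  rcases eq_top_or_exists_le_coatom N with hN | ⟨m, hm, hNm⟩
  · exact hN
  · exfalso
    have hspan : Submodule.span Aᵐᵒᵖ
        {z : P | ∃ (p : P) (j : A), j ∈ Ideal.jacobson (⊥ : Ideal A) ∧ z = op j • p} ≤ m := by
      rw [Submodule.span_le]
      rintro z ⟨p, j, hj, rfl⟩
      by_contra hz
      have hlt : m < m ⊔ Submodule.span Aᵐᵒᵖ {op j • p} := by
        refine lt_of_le_of_ne le_sup_left fun he => hz ?_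
        rw [he]
        exact Submodule.mem_sup_right (Submodule.mem_span_singleton_self _)
      have htop := hm.2 _ hlt
      have hp : p ∈ m ⊔ Submodule.span Aᵐᵒᵖ {op j • p} := htop.symm ▸ Submodule.mem_top
      obtain ⟨y, hy, z', hz', hyz⟩ := Submodule.mem_sup.1 hp
      obtain ⟨r, hr⟩ := Submodule.mem_span_singleton.1 hz'
      -- p = y + r • (op j • p) = y + op (j * unop r) • p
      have hru : (1 : A) - j * unop r ∈ Ideal.jacobson (⊥ : Ideal A) → True := fun _ => trivial
      have hmem : op ((1 : A) - j * unop r) • p ∈ m := by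
        have : op ((1 : A) - j * unop r) • p = p - (r * op j) • p := by
          rw [← op_unop r]
          rw [← op_mul]
          rw [op_sub, op_one, sub_smul, one_smul, op_unop]
        rw [this, mul_smul, hr, ← hyz]
        simpa using hy
      obtain ⟨v, hv⟩ := jac_one_sub_isUnit (jac_mul_right hj (unop r))
      have hpm : p ∈ m := by
        have h2 : p = (op (↑v⁻¹ : A)) • (op ((1 : A) - j * unop r) • p) := by
          rw [← hv, ← mul_smul, ← op_mul, v.mul_inv, op_one, one_smul]
        rw [h2]
        exact Submodule.smul_mem _ _ hmem
      exact hz (Submodule.smul_mem _ _ hpm)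
    have : (⊤ : Submodule Aᵐᵒᵖ P) ≤ m := h ▸ sup_le hNm hspan
    exact hm.1 (top_le_iff.1 this)


/-- the "corner" right ideal `eA`, as a submodule of `Aᵐᵒᵖ`. -/
abbrev cornerMod (e : A) : Submodule Aᵐᵒᵖ Aᵐᵒᵖ := Submodule.span Aᵐᵒᵖ ({op e} : Set Aᵐᵒᵖ)

lemma cornerMod_finite (e : A) : Module.Finite Aᵐᵒᵖ (cornerMod e) :=
  Module.Finite.iff_fg.2 (Submodule.fg_span_singleton _)

lemma cornerMod_projective (e : A) (he : e * e = e) :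
    Module.Projective Aᵐᵒᵖ (cornerMod e) := by
  have hmem : ∀ x : Aᵐᵒᵖ, x * op e ∈ cornerMod e := fun x => by
    rw [← smul_eq_mul]
    exact Submodule.smul_mem _ x (Submodule.mem_span_singleton_self _)
  let ρ : Aᵐᵒᵖ →ₗ[Aᵐᵒᵖ] cornerMod e :=
    { toFun := fun x => ⟨x * op e, hmem x⟩
      map_add' := fun x y => by ext; simp [add_mul]
      map_smul' := fun r x => by ext; simp [smul_eq_mul, mul_assoc] }
  refine Module.Projective.of_split (cornerMod e).subtype ρ ?_
  ext ⟨v, hv⟩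
  obtain ⟨r, hr⟩ := Submodule.mem_span_singleton.1 hv
  have : v * op e = v := by
    rw [← hr, smul_eq_mul, mul_assoc, ← op_mul, he]
  simp [ρ, this]


abbrev jsub (A : Type u) [Ring A] (P : Type u) [AddCommGroup P] [Module Aᵐᵒᵖ P] :
    Submodule Aᵐᵒᵖ P :=
  Submodule.span Aᵐᵒᵖ
    {z : P | ∃ (p : P) (j : A), j ∈ Ideal.jacobson (⊥ : Ideal A) ∧ z = op j • p}

lemma mul_op_eq (e : A) (r : Aᵐᵒᵖ) : r * op e = op (e * unop r) := by
  rw [op_mul, op_unop]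

lemma corner_quot (π : A →+* B)
    (hker : ∀ x : A, π x = 0 ↔ x ∈ Ideal.jacobson (⊥ : Ideal A))
    [Module Aᵐᵒᵖ B] (hsmul : ∀ (a : A) (b : B), (op a) • b = b * π a)
    (e : A) (he : e * e = e) :
    Nonempty (((cornerMod e : Submodule Aᵐᵒᵖ Aᵐᵒᵖ) ⧸ jsub A (cornerMod e)) ≃ₗ[Aᵐᵒᵖ]
      (Submodule.span Aᵐᵒᵖ ({π e} : Set B))) := by
  have hsm : ∀ (r : Aᵐᵒᵖ) (b : B), r • b = b * π (unop r) := fun r b =>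
    calc r • b = op (unop r) • b := by rw [op_unop]
      _ = b * π (unop r) := hsmul _ _
  let Φ : (cornerMod e : Submodule Aᵐᵒᵖ Aᵐᵒᵖ) →ₗ[Aᵐᵒᵖ] B :=
    { toFun := fun x => π (unop x.1)
      map_add' := fun x y => by simp
      map_smul' := fun r x => by
        simp only [Submodule.coe_smul, smul_eq_mul, unop_mul, map_mul, RingHom.id_apply]
        rw [hsm] }
  have hΦ : ∀ x : cornerMod e, Φ x = π (unop x.1) := fun _ => rfl
  have hrange : LinearMap.range Φ = Submodule.span Aᵐᵒᵖ ({π e} : Set B) := by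
    apply le_antisymm
    · rintro _ ⟨x, rfl⟩
      obtain ⟨r, hr⟩ := Submodule.mem_span_singleton.1 x.2
      have hx : (x : Aᵐᵒᵖ) = op (e * unop r) := by rw [← hr, smul_eq_mul, mul_op_eq]
      rw [hΦ, Submodule.mem_span_singleton]
      exact ⟨r, by rw [hx, unop_op, map_mul, hsm]⟩
    · rintro y hy
      obtain ⟨r, hr⟩ := Submodule.mem_span_singleton.1 hy
      have hmem : op (e * unop r) ∈ cornerMod e := by
        rw [Submodule.mem_span_singleton]
        exact ⟨r, by rw [smul_eq_mul, mul_op_eq]⟩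
      exact ⟨⟨op (e * unop r), hmem⟩, by rw [hΦ, unop_op, map_mul, ← hsm, hr]⟩
  have hker' : LinearMap.ker Φ = jsub A (cornerMod e) := by
    apply le_antisymm
    · rintro z hz
      rw [LinearMap.mem_ker, hΦ] at hz
      have hzJ : unop z.1 ∈ Ideal.jacobson (⊥ : Ideal A) := (hker _).1 hz
      obtain ⟨r, hr⟩ := Submodule.mem_span_singleton.1 z.2
      have hez : e * unop z.1 = unop z.1 := by
        have hx : (z : Aᵐᵒᵖ) = op (e * unop r) := by rw [← hr, smul_eq_mul, mul_op_eq]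
        rw [hx, unop_op, ← mul_assoc, he]
      apply Submodule.subset_span
      refine ⟨⟨op e, Submodule.mem_span_singleton_self _⟩, unop z.1, hzJ, ?_⟩
      ext
      show (z : Aᵐᵒᵖ) = op (unop z.1) • op e
      rw [smul_eq_mul, ← op_mul, hez, op_unop]
    · rw [Submodule.span_le]
      rintro z ⟨p, j, hj, rfl⟩
      rw [SetLike.mem_coe, LinearMap.mem_ker, hΦ]
      show π (unop ((op j • p : cornerMod e) : Aᵐᵒᵖ)) = 0
      rw [Submodule.coe_smul, smul_eq_mul, unop_mul, map_mul, unop_op, (hker j).2 hj, mul_zero]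
  exact ⟨(Submodule.quotEquivOfEq _ _ hker'.symm).trans
    ((LinearMap.quotKerEquivRange Φ).trans (LinearEquiv.ofEq _ _ hrange))⟩


lemma jsub_map {P Q : Type u} [AddCommGroup P] [Module Aᵐᵒᵖ P]
    [AddCommGroup Q] [Module Aᵐᵒᵖ Q] (E : P ≃ₗ[Aᵐᵒᵖ] Q) :
    (jsub A P).map (E : P →ₗ[Aᵐᵒᵖ] Q) = jsub A Q := by
  rw [Submodule.map_span]
  congr 1
  ext z
  constructor
  · rintro ⟨_, ⟨p, j, hj, rfl⟩, rfl⟩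
    exact ⟨E p, j, hj, map_smul E _ _⟩
  · rintro ⟨q, j, hj, rfl⟩
    exact ⟨op j • E.symm q, ⟨E.symm q, j, hj, rfl⟩, by
      rw [map_smul]; simp⟩

/-- transfer the quotient along a linear equivalence -/
def jsub_quot_equiv {P Q : Type u} [AddCommGroup P] [Module Aᵐᵒᵖ P]
    [AddCommGroup Q] [Module Aᵐᵒᵖ Q] (E : P ≃ₗ[Aᵐᵒᵖ] Q) :
    (P ⧸ jsub A P) ≃ₗ[Aᵐᵒᵖ] (Q ⧸ jsub A Q) :=
  Submodule.Quotient.equiv _ _ E (jsub_map E)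


lemma jac_left_inv' {j : A} (hj : j ∈ Ideal.jacobson (⊥ : Ideal A)) :
    ∃ z : A, z * (1 + j) = 1 ∧ z - 1 ∈ Ideal.jacobson (⊥ : Ideal A) := by
  obtain ⟨z, hz⟩ := Ideal.mem_jacobson_iff.1 hj 1
  rw [Ideal.mem_bot, mul_one] at hz
  have h1 : z * (1 + j) = 1 := by
    rw [mul_add, mul_one]
    rw [sub_eq_zero] at hz
    rw [add_comm, hz]
  refine ⟨z, h1, ?_⟩
  have : z - 1 = -(z * j) := by
    rw [sub_eq_zero] at hz
    rw [← hz]; abel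
  rw [this]
  exact neg_mem (Ideal.mul_mem_left _ z hj)

lemma jac_one_add_isUnit' {j : A} (hj : j ∈ Ideal.jacobson (⊥ : Ideal A)) :
    IsUnit (1 + j) := by
  obtain ⟨z, hz1, hz2⟩ := jac_left_inv' hj
  obtain ⟨w, hw1, -⟩ := jac_left_inv' hz2
  rw [add_sub_cancel] at hw1
  have hzu : (1 + j) * z = 1 := by
    have : w = 1 + j := by
      calc w = w * 1 := (mul_one w).symm
        _ = w * (z * (1 + j)) := by rw [hz1]
        _ = (w * z) * (1 + j) := (mul_assoc _ _ _).symm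
        _ = 1 + j := by rw [hw1, one_mul]
    rw [← this, hw1]
  exact ⟨⟨1 + j, z, hzu, hz1⟩, rfl⟩

lemma corner_lift (π : A →+* B) (hsurj : Function.Surjective π)
    (hker : ∀ x : A, π x = 0 ↔ x ∈ Ideal.jacobson (⊥ : Ideal A))
    [Module Aᵐᵒᵖ B] (hsmul : ∀ (a : A) (b : B), (op a) • b = b * π a)
    (η : B) (hη : η * η = η) (e₀ : A) (he₀ : e₀ * e₀ = e₀)
    (θ : ↥(Submodule.span Aᵐᵒᵖ ({π e₀} : Set B)) ≃ₗ[Aᵐᵒᵖ]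
         ↥(Submodule.span Aᵐᵒᵖ ({η} : Set B))) :
    ∃ f : A, f * f = f ∧ π f = η := by
  have hsm : ∀ (r : Aᵐᵒᵖ) (b : B), r • b = b * π (unop r) := fun r b =>
    calc r • b = op (unop r) • b := by rw [op_unop]
      _ = b * π (unop r) := hsmul _ _
  set ε : B := π e₀ with hεdef
  have hε : ε * ε = ε := by rw [hεdef, ← map_mul, he₀]
  set εs : ↥(Submodule.span Aᵐᵒᵖ ({ε} : Set B)) := ⟨ε, Submodule.mem_span_singleton_self ε⟩
    with hεs_def
  set ηs : ↥(Submodule.span Aᵐᵒᵖ ({η} : Set B)) := ⟨η, Submodule.mem_span_singleton_self η⟩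
    with hηs_def
  set u : B := ((θ εs : ↥(Submodule.span Aᵐᵒᵖ ({η} : Set B))) : B) with hu_def
  set v : B := ((θ.symm ηs : ↥(Submodule.span Aᵐᵒᵖ ({ε} : Set B))) : B) with hv_def
  -- v in terms of ε
  obtain ⟨rv, hrv⟩ := Submodule.mem_span_singleton.1 (θ.symm ηs).2
  set av : A := unop rv with hav_def
  have hv_eq : v = ε * π av := by rw [hv_def, ← hrv, hsm]
  -- u in terms of η
  obtain ⟨ru, hru⟩ := Submodule.mem_span_singleton.1 (θ εs).2
  set au : A := unop ru with hau_def
  have hu_eq : u = η * π au := by rw [hu_def, ← hru, hsm]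
  -- u * ε = u
  have hεsfix : (op e₀ • εs) = εs := Subtype.ext (by
    rw [SetLike.val_smul, hsmul]
    show ε * π e₀ = ε
    rw [← hεdef, hε])
  have huε : u * ε = u := by
    have h : op e₀ • θ εs = θ εs := by rw [← map_smul, hεsfix]
    have := congrArg Subtype.val h
    rw [SetLike.val_smul, hsmul] at this
    exact this
  -- v * η = v
  obtain ⟨aη, haη⟩ := hsurj η
  have hηsfix : (op aη • ηs) = ηs := Subtype.ext (by
    rw [SetLike.val_smul, hsmul]
    show η * π aη = η
    rw [haη, hη])
  have hvη : v * η = v := by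
    have h : op aη • θ.symm ηs = θ.symm ηs := by rw [← map_smul, hηsfix]
    have := congrArg Subtype.val h
    rw [SetLike.val_smul, hsmul, haη] at this
    exact this
  -- u * v = η
  have h1 : (op av • εs) = θ.symm ηs := Subtype.ext (by
    rw [SetLike.val_smul, hsmul]
    show ε * π av = v
    rw [hv_eq])
  have huvπ : u * π av = η := by
    have h2 : op av • θ εs = ηs := by rw [← map_smul, h1, LinearEquiv.apply_symm_apply]
    have := congrArg Subtype.val h2
    rw [SetLike.val_smul, hsmul] at this
    exact this
  have huv : u * v = η := by
    rw [hv_eq, ← mul_assoc, huε, huvπ]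
  -- v * u = ε
  have h1' : (op au • ηs) = θ εs := Subtype.ext (by
    rw [SetLike.val_smul, hsmul]
    show η * π au = u
    rw [hu_eq])
  have hvuπ : v * π au = ε := by
    have h2' : op au • θ.symm ηs = εs := by rw [← map_smul, h1', LinearEquiv.symm_apply_apply]
    have := congrArg Subtype.val h2'
    rw [SetLike.val_smul, hsmul] at this
    exact this
  have hvu : v * u = ε := by
    rw [hu_eq, ← mul_assoc, hvη, hvuπ]
  -- ε * v = v
  have hεv : ε * v = v := by rw [hv_eq, ← mul_assoc, hε]
  -- now lift
  obtain ⟨x, hx⟩ := hsurj v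
  obtain ⟨y, hy⟩ := hsurj u
  set j : A := e₀ * x * y * e₀ - e₀ with hj_def
  have hjJ : j ∈ Ideal.jacobson (⊥ : Ideal A) := by
    apply (hker j).1
    rw [hj_def, map_sub, map_mul, map_mul, map_mul, hx, hy, ← hεdef]
    rw [hεv, hvu, hε, sub_self]
  have ht := jac_one_add_isUnit' hjJ
  set t : Aˣ := ht.unit with ht_def
  have htv : (t : A) = 1 + j := ht.unit_spec
  have hje : e₀ * j = j := by
    rw [hj_def, mul_sub, ← mul_assoc, ← mul_assoc, ← mul_assoc, he₀]
  have hej : j * e₀ = j := by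
    rw [hj_def, sub_mul, mul_assoc, he₀]
  have hcomm : e₀ * (t : A) = (t : A) * e₀ := by
    rw [htv, mul_add, add_mul, mul_one, one_mul, hje, hej]
  have hcomm' : e₀ * ((t⁻¹ : Aˣ) : A) = ((t⁻¹ : Aˣ) : A) * e₀ := by
    calc e₀ * ((t⁻¹ : Aˣ) : A)
        = ((t⁻¹ : Aˣ) : A) * ((t : A) * e₀) * ((t⁻¹ : Aˣ) : A) := by
          rw [← mul_assoc, t.inv_mul, one_mul]
      _ = ((t⁻¹ : Aˣ) : A) * (e₀ * (t : A)) * ((t⁻¹ : Aˣ) : A) := by rw [hcomm]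
      _ = ((t⁻¹ : Aˣ) : A) * e₀ := by rw [mul_assoc _ (e₀ * (t : A)), mul_assoc e₀, t.mul_inv,
            mul_one]
  obtain ⟨w, hw_def⟩ : ∃ w : A, w = e₀ * ((t⁻¹ : Aˣ) : A) := ⟨_, rfl⟩
  have hwe : w * e₀ = w := by
    rw [hw_def, mul_assoc, ← hcomm', ← mul_assoc, he₀]
  have hew : e₀ * w = w := by
    rw [hw_def, ← mul_assoc, he₀]
  have hπt : π (t : A) = 1 := by
    rw [htv, map_add, map_one, (hker j).2 hjJ, add_zero]
  have hπtinv : π ((t⁻¹ : Aˣ) : A) = 1 := by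
    have h5 : π (((t⁻¹ : Aˣ) : A) * (t : A)) = 1 := by rw [t.inv_mul, map_one]
    rw [map_mul, hπt, mul_one] at h5
    exact h5
  have hπw : π w = ε := by
    rw [hw_def, map_mul, hπtinv, mul_one, hεdef]
  set c₀ : A := e₀ * x * y * e₀ with hc₀_def
  have hc₀t : c₀ = (t : A) * e₀ := by
    rw [htv, add_mul, one_mul, hej, hj_def, hc₀_def]
    abel
  have hc₀t' : c₀ = e₀ * (t : A) := by
    rw [htv, mul_add, mul_one, hje, hj_def, hc₀_def]
    abel
  have hw3 : w = ((t⁻¹ : Aˣ) : A) * e₀ := by rw [hw_def, hcomm']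
  have hwc : w * c₀ = e₀ := by
    rw [hw_def, hc₀t, mul_assoc e₀ ((t⁻¹ : Aˣ) : A),
      ← mul_assoc ((t⁻¹ : Aˣ) : A) ((t : Aˣ) : A) e₀, t.inv_mul, one_mul, he₀]
  have hcw : c₀ * w = e₀ := by
    rw [hw3, hc₀t', mul_assoc e₀ ((t : Aˣ) : A),
      ← mul_assoc ((t : Aˣ) : A) ((t⁻¹ : Aˣ) : A) e₀, t.mul_inv, one_mul, he₀]
  -- the idempotent
  refine ⟨y * w * x, ?_, ?_⟩
  · have hmid : w * x * y * w = w := by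
      have h2 : w * x * y * w = w * (e₀ * (x * y) * e₀) * w := by
        rw [show w * (e₀ * (x * y) * e₀) * w = (w * e₀) * (x * y) * (e₀ * w) from by
          simp only [mul_assoc], hwe, hew, mul_assoc w x y]
      have h3 : e₀ * (x * y) * e₀ = c₀ := by
        rw [hc₀_def]; simp only [mul_assoc]
      rw [h2, h3, hwc, hew]
    have hmid' : w * x * y * w * x = w * x := by rw [hmid]
    have hmid2 : w * (x * (y * (w * x))) = w * x := by
      simpa only [mul_assoc] using hmid'
    calc y * w * x * (y * w * x) = y * (w * (x * (y * (w * x)))) := by simp only [mul_assoc]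
      _ = y * (w * x) := by rw [hmid2]
      _ = y * w * x := by rw [mul_assoc]
  · rw [map_mul, map_mul, hy, hx, hπw, huε, huv]


end StmtSevenAux

/-- Let `A` be a semilocal ring, i.e. `A` admits a surjective ring homomorphism `π` onto a
semisimple ring `B` whose kernel is the Jacobson radical of `A` (so `B = A/Jac(A)`), and let
`η ∈ B` be an idempotent.  Then `η` lifts to an idempotent of `A` if and only if there is a
finitely generated projective right `A`-module `P` with `P/(P·Jac(A))` isomorphic to `ηB` as
right `A`-modules.  (Right `A`-modules are modelled as `Aᵐᵒᵖ`-modules; `B` is a right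
`A`-module via `π`.) -/
theorem stmt_7 {A B : Type u} [Ring A] [Ring B] [IsSemisimpleRing B]
    (π : A →+* B) (hsurj : Function.Surjective π)
    (hker : ∀ x : A, π x = 0 ↔ x ∈ Ideal.jacobson (⊥ : Ideal A))
    [Module Aᵐᵒᵖ B] (hsmul : ∀ (a : A) (b : B), (op a) • b = b * π a)
    (η : B) (hη : η * η = η) :
    (∃ e : A, e * e = e ∧ π e = η) ↔
      ∃ (P : Type u) (_ : AddCommGroup P) (_ : Module Aᵐᵒᵖ P),
        Module.Finite Aᵐᵒᵖ P ∧ Module.Projective Aᵐᵒᵖ P ∧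
        Nonempty
          ((P ⧸ Submodule.span Aᵐᵒᵖ
              {z : P | ∃ (p : P) (j : A),
                j ∈ Ideal.jacobson (⊥ : Ideal A) ∧ z = op j • p}) ≃ₗ[Aᵐᵒᵖ]
            (Submodule.span Aᵐᵒᵖ ({η} : Set B))) := by
  constructor
  · rintro ⟨e, he, hπe⟩
    obtain ⟨Θ⟩ := corner_quot π hker hsmul e he
    rw [hπe] at Θ
    exact ⟨↥(cornerMod e), inferInstance, inferInstance, cornerMod_finite e,
      cornerMod_projective e he, ⟨Θ⟩⟩
  · rintro ⟨P, instG, instM, hfin, hproj, ⟨ψ⟩⟩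
    letI := instG; letI := instM; letI := hfin; letI := hproj
    -- a generator of P/PJ
    set w0 : ↥(Submodule.span Aᵐᵒᵖ ({η} : Set B)) := ⟨η, Submodule.mem_span_singleton_self η⟩
      with hw0
    obtain ⟨q₀, hq₀⟩ := Submodule.Quotient.mk_surjective (jsub A P) (ψ.symm w0)
    have htop : Submodule.span Aᵐᵒᵖ ({q₀} : Set P) ⊔ jsub A P = ⊤ := by
      rw [eq_top_iff]
      rintro x -
      obtain ⟨r, hr⟩ := Submodule.mem_span_singleton.1 (ψ (Submodule.Quotient.mk x)).2
      have h1 : ψ (Submodule.Quotient.mk x) = r • w0 := Subtype.ext (by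
        rw [SetLike.val_smul]
        exact hr.symm)
      have h2 : (Submodule.Quotient.mk x : P ⧸ jsub A P) = Submodule.Quotient.mk (r • q₀) := by
        calc (Submodule.Quotient.mk x : P ⧸ jsub A P)
            = ψ.symm (ψ (Submodule.Quotient.mk x)) := (ψ.symm_apply_apply _).symm
          _ = ψ.symm (r • w0) := by rw [h1]
          _ = r • ψ.symm w0 := map_smul _ _ _
          _ = r • (Submodule.Quotient.mk q₀ : P ⧸ jsub A P) := by rw [hq₀]
          _ = Submodule.Quotient.mk (r • q₀) := rfl
      have h3 : x - r • q₀ ∈ jsub A P := (Submodule.Quotient.eq _).1 h2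
      have hx : x = r • q₀ + (x - r • q₀) := by abel
      rw [hx]
      exact add_mem
        (Submodule.mem_sup_left (Submodule.smul_mem _ r (Submodule.mem_span_singleton_self q₀)))
        (Submodule.mem_sup_right h3)
    have hspan_top : Submodule.span Aᵐᵒᵖ ({q₀} : Set P) = ⊤ := nakayama _ htop
    -- split the surjection Aᵐᵒᵖ → P
    set φ : Aᵐᵒᵖ →ₗ[Aᵐᵒᵖ] P := LinearMap.toSpanSingleton Aᵐᵒᵖ P q₀ with hφ
    have hφsurj : Function.Surjective φ := by
      rw [← LinearMap.range_eq_top, ← LinearMap.span_singleton_eq_range]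
      exact hspan_top
    obtain ⟨s, hs⟩ := Module.projective_lifting_property φ LinearMap.id hφsurj
    have hsec : ∀ p : P, φ (s p) = p := fun p => by
      have := LinearMap.ext_iff.1 hs p
      simpa using this
    set c : Aᵐᵒᵖ := s q₀ with hc
    have hsr : ∀ r : Aᵐᵒᵖ, s (φ r) = r * c := fun r => by
      rw [hφ, LinearMap.toSpanSingleton_apply, map_smul, smul_eq_mul, hc]
    have hcc : c * c = c := by
      have h4 := hsr c
      rw [hc, hsec q₀] at h4
      exact h4.symm
    set e₀ : A := unop c with he₀def
    have he₀ : e₀ * e₀ = e₀ := by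
      have h5 := congrArg unop hcc
      rwa [unop_mul] at h5
    have hinj : Function.Injective s := fun a b hab => by
      rw [← hsec a, ← hsec b, hab]
    have hrange_s : LinearMap.range s = cornerMod e₀ := by
      have hope : op e₀ = c := by rw [he₀def, op_unop]
      apply le_antisymm
      · rintro _ ⟨p, rfl⟩
        have h6 : s p = s p * c := by
          have h7 := hsr (s p)
          rwa [hsec p] at h7
        show s p ∈ Submodule.span Aᵐᵒᵖ ({op e₀} : Set Aᵐᵒᵖ)
        rw [hope, Submodule.mem_span_singleton]
        exact ⟨s p, by rw [smul_eq_mul]; exact h6.symm⟩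
      · rintro y hy
        obtain ⟨r, hr⟩ := Submodule.mem_span_singleton.1 hy
        rw [hope] at hr
        exact ⟨φ r, by rw [hsr r, ← smul_eq_mul, hr]⟩
    let E : P ≃ₗ[Aᵐᵒᵖ] ↥(cornerMod e₀) :=
      (LinearEquiv.ofInjective s hinj).trans (LinearEquiv.ofEq _ _ hrange_s)
    have χ := jsub_quot_equiv (A := A) E
    obtain ⟨Θ⟩ := corner_quot π hker hsmul e₀ he₀
    exact corner_lift π hsurj hker hsmul η hη e₀ he₀ (Θ.symm.trans (χ.symm.trans ψ))
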